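/- arXiv:2506.13235 — 6 statements merged into one kernel-verified Lean document; each statement's English description precedes it below -/
import Mathlib

section
/- Let G be a group generated by a finite set S, let p > q ≥ 1 be real numbers, and let f : G → ℝ be a finitely supported function. Set v = p/q and h = |f|^v. Then the ℓ^q norm of the gradient of h satisfies ‖∇h‖_q ≤ 2^(1/q) · |S|^((p−q)/(pq)) · v · ‖f‖_p^((p−q)/q) · ‖∇f‖_p, where ∇f(g,s) = f(g) − f(gs) for g ∈ G, s ∈ S, ‖f‖_p^p = Σ_g |f(g)|^p and ‖∇f‖_p^p = Σ_{g∈G, s∈S} |f(g)−f(gs)|^p. -/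
open Real Finset

lemma aux_bern {a b v : ℝ} (hb : 0 ≤ b) (hba : b ≤ a) (hv : 1 ≤ v) :
    a ^ v - b ^ v ≤ v * a ^ (v - 1) * (a - b) := by
  have ha : 0 ≤ a := hb.trans hba
  rcases eq_or_lt_of_le ha with h | ha
  · have hb0 : b = 0 := le_antisymm (hba.trans h.symm.le) hb
    simp [← h, hb0, Real.zero_rpow (by positivity : v ≠ 0)]
  have h1 : 1 + v * (b / a - 1) ≤ (b / a) ^ v := by
    have := one_add_mul_self_le_rpow_one_add (s := b / a - 1) (by
      have : 0 ≤ b / a := by positivity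
      linarith) hv
    simpa using this
  have h2 : (b / a) ^ v = b ^ v / a ^ v := Real.div_rpow hb ha.le v
  rw [h2] at h1
  have hav : 0 < a ^ v := Real.rpow_pos_of_pos ha v
  have h3 : (1 + v * (b / a - 1)) * a ^ v ≤ b ^ v := by
    calc (1 + v * (b / a - 1)) * a ^ v ≤ (b ^ v / a ^ v) * a ^ v :=
          mul_le_mul_of_nonneg_right h1 hav.le
      _ = b ^ v := by field_simp
  have h4 : a ^ (v - 1) = a ^ v / a := by
    rw [Real.rpow_sub ha, Real.rpow_one]
  rw [h4]
  have ha' : a ≠ 0 := ha.ne'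
  have expand : (1 + v * (b / a - 1)) * a ^ v = a ^ v + v * (a ^ v / a) * (b - a) := by
    field_simp
  rw [expand] at h3
  linarith

lemma aux_key {a b v : ℝ} (hv : 1 ≤ v) :
    |(|a| ^ v) - (|b| ^ v)| ≤ v * (max |a| |b|) ^ (v - 1) * |a - b| := by
  have hv0 : 0 ≤ v := by linarith
  wlog h : |b| ≤ |a| generalizing a b
  · have := this (a := b) (b := a) (le_of_not_ge h)
    rw [abs_sub_comm ((|a|:ℝ) ^ v), abs_sub_comm a b, max_comm]
    exact this
  rw [max_eq_left h]
  have h1 : |b| ^ v ≤ |a| ^ v := Real.rpow_le_rpow (abs_nonneg b) h hv0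
  rw [abs_of_nonneg (by linarith)]
  calc |a| ^ v - |b| ^ v ≤ v * |a| ^ (v - 1) * (|a| - |b|) :=
        aux_bern (abs_nonneg b) h hv
    _ ≤ v * |a| ^ (v - 1) * |a - b| :=
        mul_le_mul_of_nonneg_left (abs_sub_abs_le_abs_sub a b) (by positivity)


set_option maxHeartbeats 1000000 in
/-- Let `G` be a group generated by a finite set `S`, let `p > q ≥ 1`, and let
`f : G → ℝ` be finitely supported. Set `v = p/q` and `h = |f|^v`. Then
`‖∇h‖_q ≤ 2^(1/q) · |S|^((p−q)/(pq)) · v · ‖f‖_p^((p−q)/q) · ‖∇f‖_p`, where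
`∇u(g,s) = u(g) − u(gs)`, `‖u‖_p = (Σ_g |u(g)|^p)^(1/p)` and
`‖∇u‖_p = (Σ_{g,s} |u(g) − u(gs)|^p)^(1/p)`. -/
theorem stmt_1 (G : Type*) [Group G] (S : Finset G)
    (hgen : Subgroup.closure (S : Set G) = ⊤)
    (p q : ℝ) (hq : 1 ≤ q) (hpq : q < p)
    (f : G → ℝ) (hf : (Function.support f).Finite) :
    (∑' g : G, ∑ s ∈ S, |(|f g| ^ (p / q)) - (|f (g * s)| ^ (p / q))| ^ q) ^ (1 / q)
      ≤ 2 ^ (1 / q) * (S.card : ℝ) ^ ((p - q) / (p * q)) * (p / q) *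
          ((∑' g : G, |f g| ^ p) ^ (1 / p)) ^ ((p - q) / q) *
          (∑' g : G, ∑ s ∈ S, |f g - f (g * s)| ^ p) ^ (1 / p) := by
  classical
  have hq0 : (0:ℝ) < q := lt_of_lt_of_le one_pos hq
  have hp0 : (0:ℝ) < p := hq0.trans hpq
  have hpq0 : (0:ℝ) < p - q := sub_pos.2 hpq
  have hv : (1:ℝ) ≤ p / q := (one_le_div hq0).2 hpq.le
  set B : Finset G := hf.toFinset ∪ S.biUnion (fun s => hf.toFinset.image (fun g => g * s⁻¹))
    with hBdef
  have hfB : ∀ g ∉ B, f g = 0 := by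
    intro g hg
    by_contra h
    exact hg (Finset.mem_union_left _ (hf.mem_toFinset.2 h))
  have hfBs : ∀ g ∉ B, ∀ s ∈ S, f (g * s) = 0 := by
    intro g hg s hs
    by_contra h
    exact hg (Finset.mem_union_right _ (Finset.mem_biUnion.2
      ⟨s, hs, Finset.mem_image.2 ⟨g * s, hf.mem_toFinset.2 h, by group⟩⟩))
  have e1 : (∑' g : G, ∑ s ∈ S, |(|f g| ^ (p / q)) - (|f (g * s)| ^ (p / q))| ^ q)
      = ∑ g ∈ B, ∑ s ∈ S, |(|f g| ^ (p / q)) - (|f (g * s)| ^ (p / q))| ^ q := by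
    refine tsum_eq_sum fun g hg => Finset.sum_eq_zero fun s hs => ?_
    rw [hfB g hg, hfBs g hg s hs]
    simp [Real.zero_rpow (by positivity : p / q ≠ 0), Real.zero_rpow hq0.ne']
  have e2 : (∑' g : G, |f g| ^ p) = ∑ g ∈ B, |f g| ^ p := by
    refine tsum_eq_sum fun g hg => ?_
    rw [hfB g hg]
    simp [Real.zero_rpow hp0.ne']
  have e3 : (∑' g : G, ∑ s ∈ S, |f g - f (g * s)| ^ p)
      = ∑ g ∈ B, ∑ s ∈ S, |f g - f (g * s)| ^ p := by
    refine tsum_eq_sum fun g hg => Finset.sum_eq_zero fun s hs => ?_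
    rw [hfB g hg, hfBs g hg s hs]
    simp [Real.zero_rpow hp0.ne']
  rw [e1, e2, e3]
  set Np := ∑ g ∈ B, |f g| ^ p with hNpdef
  set Dp := ∑ g ∈ B, ∑ s ∈ S, |f g - f (g * s)| ^ p with hDpdef
  have hNp0 : 0 ≤ Np := Finset.sum_nonneg fun _ _ => by positivity
  have hDp0 : 0 ≤ Dp := Finset.sum_nonneg fun _ _ => Finset.sum_nonneg fun _ _ => by positivity
  have sum_abs_le : ∀ T : Finset G, ∑ x ∈ T, |f x| ^ p ≤ Np := by
    intro T
    have h1 : ∑ x ∈ T, |f x| ^ p = ∑ x ∈ T ∩ B, |f x| ^ p := by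
      refine (Finset.sum_subset Finset.inter_subset_left ?_).symm
      intro x hxT hx
      rw [hfB x (fun hxB => hx (Finset.mem_inter.2 ⟨hxT, hxB⟩))]
      simp [Real.zero_rpow hp0.ne']
    rw [h1]
    exact Finset.sum_le_sum_of_subset_of_nonneg Finset.inter_subset_right
      (fun i _ _ => by positivity)
  -- step 1: pointwise bound
  have step1 : ∑ g ∈ B, ∑ s ∈ S, |(|f g| ^ (p / q)) - (|f (g * s)| ^ (p / q))| ^ q
      ≤ (p / q) ^ q * ∑ x ∈ B ×ˢ S,
          (max |f x.1| |f (x.1 * x.2)|) ^ (p - q) * |f x.1 - f (x.1 * x.2)| ^ q := by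
    rw [← Finset.sum_product', Finset.mul_sum]
    refine Finset.sum_le_sum fun x _ => ?_
    have key := aux_key (a := f x.1) (b := f (x.1 * x.2)) hv
    have h1 : |(|f x.1| ^ (p / q)) - (|f (x.1 * x.2)| ^ (p / q))| ^ q
        ≤ ((p / q) * (max |f x.1| |f (x.1 * x.2)|) ^ (p / q - 1) * |f x.1 - f (x.1 * x.2)|) ^ q :=
      Real.rpow_le_rpow (abs_nonneg _) key hq0.le
    refine h1.trans_eq ?_
    have hM : (0:ℝ) ≤ max |f x.1| |f (x.1 * x.2)| := le_max_iff.2 (Or.inl (abs_nonneg _))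
    have heq : (p / q - 1) * q = p - q := by field_simp
    rw [Real.mul_rpow (by positivity) (abs_nonneg _), Real.mul_rpow (by positivity) (by positivity),
      ← Real.rpow_mul hM, heq, mul_assoc]
  -- Hölder inequality
  have hconj : Real.HolderConjugate (p / (p - q)) (p / q) := by
    refine ⟨?_, by positivity, by positivity⟩
    rw [inv_div, inv_div, inv_one, ← add_div, sub_add_cancel, div_self hp0.ne']
  have holder : ∑ x ∈ B ×ˢ S,
        (max |f x.1| |f (x.1 * x.2)|) ^ (p - q) * |f x.1 - f (x.1 * x.2)| ^ q
      ≤ (∑ x ∈ B ×ˢ S, ((max |f x.1| |f (x.1 * x.2)|) ^ (p - q)) ^ (p / (p - q)))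
          ^ (1 / (p / (p - q))) *
        (∑ x ∈ B ×ˢ S, (|f x.1 - f (x.1 * x.2)| ^ q) ^ (p / q)) ^ (1 / (p / q)) :=
    Real.inner_le_Lp_mul_Lq_of_nonneg _ hconj (fun i _ => by positivity)
      (fun i _ => by positivity)
  have f1 : ∀ x : G × G, ((max |f x.1| |f (x.1 * x.2)|) ^ (p - q)) ^ (p / (p - q))
      = (max |f x.1| |f (x.1 * x.2)|) ^ p := by
    intro x
    rw [← Real.rpow_mul (le_max_iff.2 (Or.inl (abs_nonneg _)))]
    congr 1
    field_simp
  have f2 : ∀ x : G × G, (|f x.1 - f (x.1 * x.2)| ^ q) ^ (p / q)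
      = |f x.1 - f (x.1 * x.2)| ^ p := by
    intro x
    rw [← Real.rpow_mul (abs_nonneg _)]
    congr 1
    field_simp
  have eDp : ∑ x ∈ B ×ˢ S, (|f x.1 - f (x.1 * x.2)| ^ q) ^ (p / q) = Dp := by
    rw [hDpdef, ← Finset.sum_product']
    exact Finset.sum_congr rfl fun x _ => f2 x
  -- bound on the max-sum
  have step4 : ∑ x ∈ B ×ˢ S, (max |f x.1| |f (x.1 * x.2)|) ^ p ≤ 2 * S.card * Np := by
    have hb : ∀ x ∈ B ×ˢ S,
        (max |f x.1| |f (x.1 * x.2)|) ^ p ≤ |f x.1| ^ p + |f (x.1 * x.2)| ^ p := by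
      intro x _
      rcases max_cases |f x.1| |f (x.1 * x.2)| with ⟨h, _⟩ | ⟨h, _⟩ <;> rw [h]
      · exact le_add_of_nonneg_right (by positivity)
      · exact le_add_of_nonneg_left (by positivity)
    calc ∑ x ∈ B ×ˢ S, (max |f x.1| |f (x.1 * x.2)|) ^ p
        ≤ ∑ x ∈ B ×ˢ S, (|f x.1| ^ p + |f (x.1 * x.2)| ^ p) := Finset.sum_le_sum hb
      _ = (∑ x ∈ B ×ˢ S, |f x.1| ^ p) + ∑ x ∈ B ×ˢ S, |f (x.1 * x.2)| ^ p :=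
          Finset.sum_add_distrib
      _ ≤ S.card * Np + S.card * Np := by
          have hA : (∑ x ∈ B ×ˢ S, |f x.1| ^ p) = S.card * Np := by
            rw [Finset.sum_product]
            simp only [Finset.sum_const, nsmul_eq_mul]
            rw [← Finset.mul_sum, hNpdef]
          have hB2 : (∑ x ∈ B ×ˢ S, |f (x.1 * x.2)| ^ p) ≤ S.card * Np := by
            rw [Finset.sum_product_right]
            calc ∑ s ∈ S, ∑ g ∈ B, |f (g * s)| ^ p ≤ ∑ _s ∈ S, Np := by
                  refine Finset.sum_le_sum fun s _ => ?_
                  have himg : ∑ g ∈ B, |f (g * s)| ^ p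
                      = ∑ x ∈ B.image (fun g => g * s), |f x| ^ p := by
                    rw [Finset.sum_image (fun a _ b _ h => mul_right_cancel h)]
                  rw [himg]
                  exact sum_abs_le _
              _ = S.card * Np := by rw [Finset.sum_const, nsmul_eq_mul]
          exact add_le_add hA.le hB2
      _ = 2 * S.card * Np := by ring
  have main : ∑ g ∈ B, ∑ s ∈ S, |(|f g| ^ (p / q)) - (|f (g * s)| ^ (p / q))| ^ q
      ≤ (p / q) ^ q * ((2 * S.card * Np) ^ ((p - q) / p) * Dp ^ (q / p)) := by
    refine step1.trans ?_
    refine mul_le_mul_of_nonneg_left ?_ (by positivity)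
    refine holder.trans ?_
    rw [eDp, one_div_div, one_div_div]
    refine mul_le_mul_of_nonneg_right ?_ (by positivity)
    refine Real.rpow_le_rpow (Finset.sum_nonneg fun i _ => by positivity) ?_ (by positivity)
    calc ∑ x ∈ B ×ˢ S, ((max |f x.1| |f (x.1 * x.2)|) ^ (p - q)) ^ (p / (p - q))
        = ∑ x ∈ B ×ˢ S, (max |f x.1| |f (x.1 * x.2)|) ^ p :=
          Finset.sum_congr rfl fun x _ => f1 x
      _ ≤ 2 * S.card * Np := step4
  have final1 : (∑ g ∈ B, ∑ s ∈ S, |(|f g| ^ (p / q)) - (|f (g * s)| ^ (p / q))| ^ q) ^ (1 / q)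
      ≤ ((p / q) ^ q * ((2 * S.card * Np) ^ ((p - q) / p) * Dp ^ (q / p))) ^ (1 / q) :=
    Real.rpow_le_rpow
      (Finset.sum_nonneg fun _ _ => Finset.sum_nonneg fun _ _ => by positivity)
      main (by positivity)
  refine final1.trans ?_
  have c2 : (p - q) / p * (1 / q) = (p - q) / (p * q) := by
    rw [div_mul_div_comm, mul_one]
  have c3 : q / p * (1 / q) = 1 / p := by
    field_simp
  have e4 : ((p / q) ^ q * ((2 * S.card * Np) ^ ((p - q) / p) * Dp ^ (q / p))) ^ (1 / q)
      = (p / q) * ((2 * (S.card : ℝ) * Np) ^ ((p - q) / (p * q)) * Dp ^ (1 / p)) := by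
    rw [Real.mul_rpow (by positivity) (by positivity),
        Real.mul_rpow (by positivity) (by positivity),
        ← Real.rpow_mul (by positivity : (0:ℝ) ≤ p / q),
        ← Real.rpow_mul (by positivity : (0:ℝ) ≤ 2 * (S.card : ℝ) * Np),
        ← Real.rpow_mul hDp0, mul_one_div_cancel hq0.ne', Real.rpow_one, c2, c3]
  have e5 : (2 * (S.card : ℝ) * Np) ^ ((p - q) / (p * q))
      = 2 ^ ((p - q) / (p * q)) * (S.card : ℝ) ^ ((p - q) / (p * q)) * Np ^ ((p - q) / (p * q)) := by
    rw [Real.mul_rpow (by positivity) hNp0, Real.mul_rpow (by positivity) (by positivity)]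
  have e6 : (Np ^ (1 / p)) ^ ((p - q) / q) = Np ^ ((p - q) / (p * q)) := by
    rw [← Real.rpow_mul hNp0, div_mul_div_comm, one_mul]
  have h2le : (2:ℝ) ^ ((p - q) / (p * q)) ≤ 2 ^ (1 / q) := by
    apply Real.rpow_le_rpow_of_exponent_le one_le_two
    rw [div_le_div_iff₀ (by positivity) hq0]
    nlinarith
  rw [e4, e5, e6]
  calc (p / q) * (2 ^ ((p - q) / (p * q)) * (S.card : ℝ) ^ ((p - q) / (p * q))
          * Np ^ ((p - q) / (p * q)) * Dp ^ (1 / p))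
      = 2 ^ ((p - q) / (p * q)) * ((p / q) * ((S.card : ℝ) ^ ((p - q) / (p * q))
          * Np ^ ((p - q) / (p * q)) * Dp ^ (1 / p))) := by ring
    _ ≤ 2 ^ (1 / q) * ((p / q) * ((S.card : ℝ) ^ ((p - q) / (p * q))
          * Np ^ ((p - q) / (p * q)) * Dp ^ (1 / p))) :=
        mul_le_mul_of_nonneg_right h2le (by positivity)
    _ = 2 ^ (1 / q) * (S.card : ℝ) ^ ((p - q) / (p * q)) * (p / q)
          * Np ^ ((p - q) / (p * q)) * Dp ^ (1 / p) := by ring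
end

section
/- Let H be a group and K a proper subgroup of H. Then the lampshuffler group Shuffler(H) = FSym(H) ⋊ H contains a subgroup isomorphic to the wreath product FSym(S) ≀ K, where S is a set of coset representatives of H/K (so |S| = [H:K]). Explicitly, the set G = {(σ, h) ∈ Shuffler(H) : h ∈ K and σ(kS) = kS for all k ∈ K} is a subgroup of Shuffler(H) isomorphic to FSym(S) ≀ K. -/
open Pointwise

/-- The group of finitely supported permutations of a set `X`, as a subgroup of
the full permutation group. -/
def fsym (X : Type*) : Subgroup (Equiv.Perm X) where
  carrier := {σ : Equiv.Perm X | {x : X | σ x ≠ x}.Finite}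
  one_mem' := by simp
  mul_mem' := by
    intro a b ha hb
    refine Set.Finite.subset (ha.union hb) ?_
    intro x hx
    simp only [Set.mem_setOf_eq, Equiv.Perm.mul_apply] at hx
    by_contra hc
    simp only [Set.mem_union, Set.mem_setOf_eq, not_or, not_not] at hc
    rw [hc.2, hc.1] at hx
    exact hx rfl
  inv_mem' := by
    intro a ha
    refine Set.Finite.subset ha ?_
    intro x hx
    simp only [Set.mem_setOf_eq] at hx ⊢
    intro h
    apply hx
    conv_lhs => rw [← h]
    exact Equiv.symm_apply_apply a x

theorem conj_mem_fsym {X : Type*} (c : Equiv.Perm X) {σ : Equiv.Perm X}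
    (h : σ ∈ fsym X) : c * σ * c⁻¹ ∈ fsym X := by
  refine Set.Finite.subset (Set.Finite.image c h) ?_
  intro x hx
  simp only [Set.mem_setOf_eq, Equiv.Perm.mul_apply] at hx
  refine ⟨c⁻¹ x, ?_, by simp⟩
  simp only [Set.mem_setOf_eq]
  intro hc
  apply hx
  rw [hc]
  simp

/-- The action of a group `H` on the permutations of `H`, by
`(h·σ)(x) = h σ(h⁻¹ x)`, i.e. conjugation by the left translation by `h`. -/
def permAct (H : Type*) [Group H] : H →* MulAut (Equiv.Perm H) :=
  MulAut.conj.comp (MulAction.toPermHom H H)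

theorem permAct_apply {H : Type*} [Group H] (h : H) (σ : Equiv.Perm H) (x : H) :
    permAct H h σ x = h * σ (h⁻¹ * x) := rfl

theorem permAct_mem_fsym {H : Type*} [Group H] (h : H) {σ : Equiv.Perm H}
    (hσ : σ ∈ fsym H) : permAct H h σ ∈ fsym H :=
  conj_mem_fsym _ hσ

/-- The "unrestricted" lampshuffler: the semidirect product of the full
permutation group of `H` with `H`. -/
abbrev BigShuffler (H : Type*) [Group H] := SemidirectProduct (Equiv.Perm H) H (permAct H)

/-- The lampshuffler group `Shuffler(H) = FSym(H) ⋊ H`, realised as the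
subgroup of `BigShuffler H` whose permutation part is finitely supported. -/
def Shuffler (H : Type*) [Group H] : Subgroup (BigShuffler H) where
  carrier := {p | p.left ∈ fsym H}
  one_mem' := by
    simp only [Set.mem_setOf_eq, SemidirectProduct.one_left]
    exact one_mem _
  mul_mem' := by
    intro a b ha hb
    simp only [Set.mem_setOf_eq, SemidirectProduct.mul_left] at *
    exact mul_mem ha (permAct_mem_fsym _ hb)
  inv_mem' := by
    intro a ha
    simp only [Set.mem_setOf_eq, SemidirectProduct.inv_left] at *
    exact permAct_mem_fsym _ (inv_mem ha)

/-- The restricted direct sum `⊕_K A`, as the subgroup of `K → A` of functions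
with finite (multiplicative) support. -/
def finSuppFuns (K A : Type*) [Group A] : Subgroup (K → A) where
  carrier := {f | (Function.mulSupport f).Finite}
  one_mem' := by simp [Function.mulSupport_one]
  mul_mem' := by
    intro a b ha hb
    exact Set.Finite.subset (ha.union hb) (Function.mulSupport_mul a b)
  inv_mem' := by
    intro a ha
    simpa [Function.mulSupport_inv] using ha

/-- The translation action of `K` on `K → A`: `(k·f)(x) = f(k⁻¹ x)`. -/
def wreathAct (A K : Type*) [Group A] [Group K] : K →* MulAut (K → A) where
  toFun k :=
    { toFun := fun f x => f (k⁻¹ * x)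
      invFun := fun f x => f (k * x)
      left_inv := by intro f; funext x; simp [mul_assoc]
      right_inv := by intro f; funext x; simp [mul_assoc]
      map_mul' := by intro f g; rfl }
  map_one' := by
    ext f x
    simp
  map_mul' := by
    intro k₁ k₂
    ext f x
    simp [mul_assoc]

/-- The "unrestricted" wreath product `(K → A) ⋊ K`. -/
abbrev BigWreath (A K : Type*) [Group A] [Group K] :=
  SemidirectProduct (K → A) K (wreathAct A K)

theorem wreathAct_mem_finSuppFuns {A K : Type*} [Group A] [Group K] (k : K)
    {f : K → A} (hf : f ∈ finSuppFuns K A) : wreathAct A K k f ∈ finSuppFuns K A := by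
  refine Set.Finite.subset (Set.Finite.image (fun x => k * x) hf) ?_
  intro x hx
  exact ⟨k⁻¹ * x, hx, by simp⟩

/-- The (restricted) wreath product `A ≀ K = (⊕_K A) ⋊ K`, realised as the
subgroup of `BigWreath A K` whose function part has finite support. -/
def Wreath (A K : Type*) [Group A] [Group K] : Subgroup (BigWreath A K) where
  carrier := {p | p.left ∈ finSuppFuns K A}
  one_mem' := by
    simp only [Set.mem_setOf_eq, SemidirectProduct.one_left]
    exact one_mem _
  mul_mem' := by
    intro a b ha hb
    simp only [Set.mem_setOf_eq, SemidirectProduct.mul_left] at *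
    exact mul_mem ha (wreathAct_mem_finSuppFuns _ hb)
  inv_mem' := by
    intro a ha
    simp only [Set.mem_setOf_eq, SemidirectProduct.inv_left] at *
    exact wreathAct_mem_finSuppFuns _ (inv_mem ha)

section Aux

variable {H : Type*} [Group H] {K : Subgroup H} {S : Set H}

/-- From a family of permutations of `S` indexed by `K`, the permutation of `H`
acting on each coset independently. -/
def theta (e : ↥K × ↥S ≃ H) : (↥K → Equiv.Perm ↥S) →* Equiv.Perm H where
  toFun f := e.permCongr (Equiv.prodShear (Equiv.refl ↥K) f)
  map_one' := by
    ext x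
    simp [Equiv.permCongr_apply, Equiv.prodShear]
  map_mul' f g := by
    ext x
    simp [Equiv.permCongr_apply, Equiv.prodShear]

theorem theta_apply (e : ↥K × ↥S ≃ H) (f : ↥K → Equiv.Perm ↥S) (k : ↥K) (s : ↥S) :
    theta e f (e (k, s)) = e (k, f k s) := by
  simp [theta, Equiv.permCongr_apply, Equiv.prodShear]

theorem theta_injective (e : ↥K × ↥S ≃ H) : Function.Injective (theta e) := by
  intro f g hfg
  funext k
  ext s
  have := congrArg (fun τ : Equiv.Perm H => τ (e (k, s))) hfg
  simp only [theta_apply] at this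
  exact congrArg (fun p : ↥K × ↥S => (p.2 : H)) (e.injective this)

/-- The same, for families of finitely supported permutations. -/
def thetaSub (e : ↥K × ↥S ≃ H) : (↥K → ↥(fsym ↥S)) →* Equiv.Perm H :=
  (theta e).comp (Pi.monoidHom fun k => (fsym ↥S).subtype.comp (Pi.evalMonoidHom _ k))

theorem thetaSub_apply (e : ↥K × ↥S ≃ H) (f : ↥K → ↥(fsym ↥S)) (k : ↥K) (s : ↥S) :
    thetaSub e f (e (k, s)) = e (k, (f k : Equiv.Perm ↥S) s) :=
  theta_apply e _ k s

theorem thetaSub_injective (e : ↥K × ↥S ≃ H) : Function.Injective (thetaSub e) := by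
  intro f g hfg
  have := theta_injective e hfg
  funext k
  exact Subtype.ext (congrFun this k)

theorem theta_comm (e : ↥K × ↥S ≃ H) (he : ∀ (k : ↥K) (s : ↥S), e (k, s) = (k : H) * s)
    (g : ↥K) :
    (thetaSub e).comp (wreathAct (↥(fsym ↥S)) ↥K g).toMonoidHom
      = (permAct H (g : H) : MulAut (Equiv.Perm H)).toMonoidHom.comp (thetaSub e) := by
  ext f x
  obtain ⟨⟨k, s⟩, rfl⟩ := e.surjective x
  simp only [MonoidHom.comp_apply, MulEquiv.coe_toMonoidHom]
  have h2 : thetaSub e (wreathAct (↥(fsym ↥S)) ↥K g f) (e (k, s))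
      = e (k, ((f (g⁻¹ * k) : Equiv.Perm ↥S)) s) := by
    rw [thetaSub_apply]; rfl
  rw [h2, permAct_apply]
  have h1 : ((g : H))⁻¹ * e (k, s) = e (g⁻¹ * k, s) := by
    rw [he, he]; push_cast; rw [mul_assoc]
  rw [h1, thetaSub_apply, he, he]
  push_cast
  rw [← mul_assoc, mul_inv_cancel_left]

theorem thetaSub_mem_fsym (e : ↥K × ↥S ≃ H) {f : ↥K → ↥(fsym ↥S)}
    (hf : f ∈ finSuppFuns ↥K ↥(fsym ↥S)) : thetaSub e f ∈ fsym H := by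
  have hfin : (⋃ k ∈ Function.mulSupport f,
      ({k} : Set ↥K) ×ˢ {s : ↥S | (f k : Equiv.Perm ↥S) s ≠ s}).Finite :=
    Set.Finite.biUnion hf fun k _ => (Set.finite_singleton k).prod (f k).2
  refine Set.Finite.subset (hfin.image e) ?_
  intro x hx
  obtain ⟨⟨k, s⟩, rfl⟩ := e.surjective x
  simp only [Set.mem_setOf_eq, thetaSub_apply] at hx
  have hs : (f k : Equiv.Perm ↥S) s ≠ s := fun h => hx (by rw [h])
  have hk : f k ≠ 1 := by
    intro h
    apply hs
    rw [h]
    rfl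
  exact ⟨(k, s), Set.mem_biUnion hk ⟨rfl, hs⟩, rfl⟩

open Pointwise in
theorem thetaSub_image (e : ↥K × ↥S ≃ H) (he : ∀ (k : ↥K) (s : ↥S), e (k, s) = (k : H) * s)
    (f : ↥K → ↥(fsym ↥S)) (k : ↥K) :
    ⇑(thetaSub e f) '' ((k : H) • S) = (k : H) • S := by
  apply Set.Subset.antisymm
  · rintro _ ⟨y, hy, rfl⟩
    obtain ⟨s, hs, rfl⟩ := hy
    simp only [smul_eq_mul]
    have h1 : (k : H) * s = e (k, ⟨s, hs⟩) := (he k ⟨s, hs⟩).symm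
    rw [h1, thetaSub_apply, he]
    exact ⟨_, ((f k : Equiv.Perm ↥S) ⟨s, hs⟩).2, rfl⟩
  · rintro _ ⟨s, hs, rfl⟩
    simp only [smul_eq_mul]
    refine ⟨e (k, ((f k : Equiv.Perm ↥S))⁻¹ ⟨s, hs⟩), ?_, ?_⟩
    · rw [he]
      exact ⟨_, (((f k : Equiv.Perm ↥S))⁻¹ ⟨s, hs⟩).2, rfl⟩
    · rw [thetaSub_apply]
      simp only [← Equiv.Perm.mul_apply, mul_inv_cancel, Equiv.Perm.one_apply]
      exact he k ⟨s, hs⟩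

/-- The homomorphism from the wreath product into the lampshuffler. -/
def wreathToShuffler (e : ↥K × ↥S ≃ H)
    (he : ∀ (k : ↥K) (s : ↥S), e (k, s) = (k : H) * s) :
    BigWreath ↥(fsym ↥S) ↥K →* BigShuffler H :=
  SemidirectProduct.map (thetaSub e) K.subtype (theta_comm e he)

theorem wreathToShuffler_left (e : ↥K × ↥S ≃ H) (he : ∀ (k : ↥K) (s : ↥S), e (k, s) = (k : H) * s)
    (p : BigWreath ↥(fsym ↥S) ↥K) :
    (wreathToShuffler e he p).left = thetaSub e p.left := rfl

theorem wreathToShuffler_right (e : ↥K × ↥S ≃ H) (he : ∀ (k : ↥K) (s : ↥S), e (k, s) = (k : H) * s)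
    (p : BigWreath ↥(fsym ↥S) ↥K) :
    (wreathToShuffler e he p).right = (p.right : H) := rfl

theorem wreathToShuffler_injective (e : ↥K × ↥S ≃ H)
    (he : ∀ (k : ↥K) (s : ↥S), e (k, s) = (k : H) * s) :
    Function.Injective (wreathToShuffler e he) := by
  intro p q hpq
  have hl : thetaSub e p.left = thetaSub e q.left := by
    rw [← wreathToShuffler_left e he, ← wreathToShuffler_left e he, hpq]
  have hr : (p.right : H) = (q.right : H) := by
    rw [← wreathToShuffler_right e he, ← wreathToShuffler_right e he, hpq]
  ext1
  · exact thetaSub_injective e hl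
  · exact Subtype.ext hr

open Pointwise in
theorem inv_image_coset {σ : Equiv.Perm H} (k : H)
    (h : ⇑σ '' (k • S) = k • S) : ⇑σ⁻¹ '' (k • S) = k • S := by
  conv_lhs => rw [← h]
  rw [Set.image_image]
  simp

/-- The restriction of a coset-preserving permutation to a coset, as a function
on `S`. -/
def restrictFun (e : ↥K × ↥S ≃ H) (σ : Equiv.Perm H) (k : ↥K) (s : ↥S) : ↥S :=
  (e.symm (σ (e (k, s)))).2

open Pointwise in
theorem restrictFun_spec (e : ↥K × ↥S ≃ H)
    (he : ∀ (k : ↥K) (s : ↥S), e (k, s) = (k : H) * s) {σ : Equiv.Perm H} {k : ↥K}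
    (hk : ⇑σ '' ((k : H) • S) = (k : H) • S) (s : ↥S) :
    e (k, restrictFun e σ k s) = σ (e (k, s)) := by
  have hmem : σ (e (k, s)) ∈ (k : H) • S := by
    rw [← hk]
    exact ⟨e (k, s), by rw [he]; exact ⟨s, s.2, rfl⟩, rfl⟩
  obtain ⟨s', hs', hss⟩ := hmem
  have h3 : σ (e (k, s)) = e (k, ⟨s', hs'⟩) := by
    rw [← hss, he]; rfl
  show e (k, (e.symm (σ (e (k, s)))).2) = σ (e (k, s))
  rw [h3, e.symm_apply_apply]

open Pointwise in
/-- The restriction of a coset-preserving permutation to a coset, as a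
permutation of `S`. -/
def restrictPerm (e : ↥K × ↥S ≃ H)
    (he : ∀ (k : ↥K) (s : ↥S), e (k, s) = (k : H) * s) (σ : Equiv.Perm H)
    (hσ : ∀ k : ↥K, ⇑σ '' ((k : H) • S) = (k : H) • S) (k : ↥K) : Equiv.Perm ↥S where
  toFun := restrictFun e σ k
  invFun := restrictFun e σ⁻¹ k
  left_inv s := by
    have h1 := restrictFun_spec e he (hσ k) s
    have h2 := restrictFun_spec e he (inv_image_coset _ (hσ k)) (restrictFun e σ k s)
    rw [h1] at h2
    simp only [← Equiv.Perm.mul_apply, inv_mul_cancel, Equiv.Perm.one_apply] at h2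
    exact congrArg Prod.snd (e.injective h2)
  right_inv s := by
    have h1 := restrictFun_spec e he (inv_image_coset _ (hσ k)) s
    have h2 := restrictFun_spec e he (hσ k) (restrictFun e σ⁻¹ k s)
    rw [h1] at h2
    simp only [← Equiv.Perm.mul_apply, mul_inv_cancel, Equiv.Perm.one_apply] at h2
    exact congrArg Prod.snd (e.injective h2)

open Pointwise in
theorem restrictFun_ne_imp (e : ↥K × ↥S ≃ H)
    (he : ∀ (k : ↥K) (s : ↥S), e (k, s) = (k : H) * s) {σ : Equiv.Perm H} {k : ↥K}
    (hk : ⇑σ '' ((k : H) • S) = (k : H) • S) {s : ↥S}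
    (hs : restrictFun e σ k s ≠ s) : σ (e (k, s)) ≠ e (k, s) := by
  intro h
  apply hs
  have h1 := restrictFun_spec e he hk s
  rw [h] at h1
  exact congrArg Prod.snd (e.injective h1)

open Pointwise in
theorem restrictPerm_mem_fsym (e : ↥K × ↥S ≃ H)
    (he : ∀ (k : ↥K) (s : ↥S), e (k, s) = (k : H) * s) {σ : Equiv.Perm H}
    (hσfs : σ ∈ fsym H) (hσ : ∀ k : ↥K, ⇑σ '' ((k : H) • S) = (k : H) • S) (k : ↥K) :
    restrictPerm e he σ hσ k ∈ fsym ↥S := by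
  refine Set.Finite.subset (Set.Finite.image (fun x => (e.symm x).2) hσfs) ?_
  intro s hs
  simp only [Set.mem_setOf_eq] at hs
  exact ⟨e (k, s), restrictFun_ne_imp e he (hσ k) hs, by simp⟩

open Pointwise in
theorem mulSupport_restrict_finite (e : ↥K × ↥S ≃ H)
    (he : ∀ (k : ↥K) (s : ↥S), e (k, s) = (k : H) * s) {σ : Equiv.Perm H}
    (hσfs : σ ∈ fsym H) (hσ : ∀ k : ↥K, ⇑σ '' ((k : H) • S) = (k : H) • S) :
    (Function.mulSupport fun k => restrictPerm e he σ hσ k).Finite := by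
  refine Set.Finite.subset (Set.Finite.image (fun x => (e.symm x).1) hσfs) ?_
  intro k hk
  have : ∃ s : ↥S, restrictFun e σ k s ≠ s := by
    by_contra hc
    push_neg at hc
    exact hk (Equiv.ext hc)
  obtain ⟨s, hs⟩ := this
  exact ⟨e (k, s), restrictFun_ne_imp e he (hσ k) hs, by simp⟩


end Aux


open Pointwise in
/-- Let `K` be a proper subgroup of `H` and `S` a set of coset representatives
of `H/K` (so that `(k,s) ↦ k·s` is a bijection `K × S → H`). Then
`G = {(σ,h) ∈ Shuffler(H) : h ∈ K and σ(kS) = kS for all k ∈ K}` is a subgroup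
of `Shuffler(H)` isomorphic to the wreath product `FSym(S) ≀ K`. -/
theorem stmt_4 (H : Type*) [Group H] (K : Subgroup H) (hK : K ≠ ⊤) (S : Set H)
    (hS : Function.Bijective (fun p : K × S => (p.1 : H) * (p.2 : H))) :
    ∃ G : Subgroup (BigShuffler H), G ≤ Shuffler H ∧
      (∀ p : BigShuffler H, p ∈ G ↔ (p.left ∈ fsym H ∧ p.right ∈ K ∧
          ∀ k : K, ⇑p.left '' ((k : H) • S) = (k : H) • S)) ∧
      Nonempty (↥G ≃* ↥(Wreath ↥(fsym ↥S) ↥K)) := by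
  classical
  let e : ↥K × ↥S ≃ H := Equiv.ofBijective _ hS
  have he : ∀ (k : ↥K) (s : ↥S), e (k, s) = (k : H) * s := fun k s => rfl
  refine ⟨Subgroup.map (wreathToShuffler e he) (Wreath ↥(fsym ↥S) ↥K), ?_, ?_,
    ⟨((Wreath ↥(fsym ↥S) ↥K).equivMapOfInjective _
      (wreathToShuffler_injective e he)).symm⟩⟩
  · rintro _ ⟨q, hq, rfl⟩
    show (wreathToShuffler e he q).left ∈ fsym H
    rw [wreathToShuffler_left]
    exact thetaSub_mem_fsym e hq
  · intro p
    constructor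
    · rintro ⟨q, hq, rfl⟩
      refine ⟨?_, ?_, ?_⟩
      · rw [wreathToShuffler_left]; exact thetaSub_mem_fsym e hq
      · rw [wreathToShuffler_right]; exact q.right.2
      · intro k
        rw [wreathToShuffler_left]
        exact thetaSub_image e he q.left k
    · rintro ⟨hσ, hh, hcos⟩
      refine ⟨⟨fun k => ⟨restrictPerm e he p.left hcos k,
          restrictPerm_mem_fsym e he hσ hcos k⟩, ⟨p.right, hh⟩⟩, ?_, ?_⟩
      · show _ ∈ finSuppFuns _ _
        refine Set.Finite.subset (mulSupport_restrict_finite e he hσ hcos) ?_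
        intro k hk
        simp only [Function.mem_mulSupport] at hk ⊢
        exact fun hc => hk (Subtype.ext hc)
      · have hl : thetaSub e (fun k => (⟨restrictPerm e he p.left hcos k,
            restrictPerm_mem_fsym e he hσ hcos k⟩ : ↥(fsym ↥S))) = p.left := by
          ext x
          obtain ⟨⟨k, s⟩, rfl⟩ := e.surjective x
          rw [thetaSub_apply]
          exact restrictFun_spec e he (hcos k) s
        ext1
        · exact hl
        · rfl
end

section
/- If a group H is not co-Hopfian, then the lampshuffler Shuffler(H) = FSym(H) ⋊ H is not co-Hopfian. Explicitly, given an injective non-surjective endomorphism ψ of H, the map (σ, g) ↦ (σ̄, ψ(g)), where σ̄(x) = ψ(σ(ψ⁻¹(x))) if x is in the image of ψ and σ̄(x) = x otherwise, is a well-defined injective non-surjective endomorphism of Shuffler(H). -/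
open Pointwise

/-- If a group `H` is not co-Hopfian, i.e. admits an injective non-surjective
endomorphism `ψ`, then the lampshuffler `Shuffler(H) = FSym(H) ⋊ H` is not
co-Hopfian: it admits an injective non-surjective endomorphism. -/
theorem stmt_6 (H : Type*) [Group H] (ψ : H →* H)
    (hinj : Function.Injective ψ) (hsurj : ¬ Function.Surjective ψ) :
    ∃ φ : ↥(Shuffler H) →* ↥(Shuffler H),
      Function.Injective φ ∧ ¬ Function.Surjective φ := by
  classical
  set ι : H ↪ H := ⟨ψ, hinj⟩ with hι
  have hrange : Set.range ι = Set.range ψ := rfl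
  have compat : ∀ g : H, (Equiv.Perm.viaEmbeddingHom ι).comp (permAct H g).toMonoidHom
      = (permAct H (ψ g)).toMonoidHom.comp (Equiv.Perm.viaEmbeddingHom ι) := by
    intro g
    ext σ x
    simp only [MonoidHom.comp_apply, MulEquiv.coe_toMonoidHom, Equiv.Perm.viaEmbeddingHom_apply]
    by_cases hx : x ∈ Set.range ι
    · obtain ⟨y, rfl⟩ := hx
      have h1 : (ψ g)⁻¹ * ι y = ι (g⁻¹ * y) := by
        show (ψ g)⁻¹ * ψ y = ψ (g⁻¹ * y)
        rw [map_mul, map_inv]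
      rw [Equiv.Perm.viaEmbedding_apply, permAct_apply, permAct_apply, h1,
        Equiv.Perm.viaEmbedding_apply]
      show ψ (g * σ (g⁻¹ * y)) = ψ g * ψ (σ (g⁻¹ * y))
      rw [map_mul]
    · have hx' : (ψ g)⁻¹ * x ∉ Set.range ι := by
        rintro ⟨y, hy⟩
        apply hx
        refine ⟨g * y, ?_⟩
        have h2 : (ι (g * y) : H) = ψ g * ι y := by
          show ψ (g * y) = ψ g * ψ y
          rw [map_mul]
        rw [h2, hy]
        group
      rw [Equiv.Perm.viaEmbedding_apply_of_notMem _ _ _ hx, permAct_apply,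
        Equiv.Perm.viaEmbedding_apply_of_notMem _ _ _ hx']
      group
  set Ψ : BigShuffler H →* BigShuffler H :=
    SemidirectProduct.map (Equiv.Perm.viaEmbeddingHom ι) ψ compat with hΨ
  have hfsym : ∀ σ : Equiv.Perm H, σ ∈ fsym H → Equiv.Perm.viaEmbeddingHom ι σ ∈ fsym H := by
    intro σ hσ
    refine Set.Finite.subset (hσ.image ι) ?_
    intro x hx
    simp only [Set.mem_setOf_eq, Equiv.Perm.viaEmbeddingHom_apply] at hx
    by_cases hr : x ∈ Set.range ι
    · obtain ⟨y, rfl⟩ := hr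
      rw [Equiv.Perm.viaEmbedding_apply] at hx
      exact ⟨y, fun h => hx (by rw [h]), rfl⟩
    · exact absurd (Equiv.Perm.viaEmbedding_apply_of_notMem σ ι x hr) hx
  have hmem : ∀ p : ↥(Shuffler H), Ψ (p : BigShuffler H) ∈ Shuffler H := by
    intro p
    have := p.2
    change (p : BigShuffler H).left ∈ fsym H at this
    change (Ψ (p : BigShuffler H)).left ∈ fsym H
    rw [hΨ, SemidirectProduct.map_left]
    exact hfsym _ this
  refine ⟨(Ψ.comp (Shuffler H).subtype).codRestrict (Shuffler H) hmem, ?_, ?_⟩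
  · have hΨinj : Function.Injective Ψ := by
      intro a b hab
      have hl := congrArg SemidirectProduct.left hab
      have hr := congrArg SemidirectProduct.right hab
      rw [hΨ, SemidirectProduct.map_left, SemidirectProduct.map_left] at hl
      rw [hΨ, SemidirectProduct.map_right, SemidirectProduct.map_right] at hr
      exact SemidirectProduct.ext (Equiv.Perm.viaEmbeddingHom_injective ι hl) (hinj hr)
    intro a b hab
    exact Subtype.ext (hΨinj (Subtype.ext_iff.mp hab))
  · intro hs
    obtain ⟨h, hh⟩ : ∃ h : H, h ∉ Set.range ψ := by
      by_contra hc
      push_neg at hc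
      exact hsurj fun y => hc y
    have htmem : (SemidirectProduct.inr h : BigShuffler H) ∈ Shuffler H := by
      change (SemidirectProduct.inr h : BigShuffler H).left ∈ fsym H
      rw [SemidirectProduct.left_inr]
      exact one_mem _
    obtain ⟨p, hp⟩ := hs ⟨_, htmem⟩
    apply hh
    refine ⟨(p : BigShuffler H).right, ?_⟩
    have := congrArg (fun q : ↥(Shuffler H) => (q : BigShuffler H).right) hp
    simpa [hΨ] using this
end

section
/- For a nontrivial group H, the lampshuffler Shuffler(H) = FSym(H) ⋊ H is not perfect, i.e., its commutator subgroup is a proper subgroup. -/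
open Pointwise

section SignAux

open Equiv Equiv.Perm

theorem fsgn_cond {X : Type*} (σ : Equiv.Perm X) : ∀ x, σ (σ x) ≠ σ x ↔ σ x ≠ x :=
  fun x => (⟨fun h hc => h (σ.injective hc), fun h hc => h (by rw [hc]; exact hc)⟩ :
    σ x ≠ x ↔ σ (σ x) ≠ σ x).symm

/-- The sign of a finitely supported permutation, defined by restricting to its support. -/
noncomputable def fsgn {X : Type*} (σ : Equiv.Perm X) (h : {x : X | σ x ≠ x}.Finite) : ℤˣ :=
  letI : Fintype {x : X // σ x ≠ x} := h.fintype
  letI : DecidableEq {x : X // σ x ≠ x} := Classical.decEq _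
  Equiv.Perm.sign (σ.subtypePerm (p := fun x => σ x ≠ x) (fsgn_cond σ))

theorem invariant_of_supp_subset {X : Type*} (σ : Equiv.Perm X) {s : Set X}
    (hsub : {x : X | σ x ≠ x} ⊆ s) : ∀ x, σ x ∈ s ↔ x ∈ s := by
  intro x
  by_cases h : σ x = x
  · rw [h]
  · have h1 : x ∈ s := hsub h
    have h2 : σ x ∈ s := hsub (show σ (σ x) ≠ σ x from fun hc => h (σ.injective hc))
    simp [h1, h2]

/-- `fsgn` equals the sign of the restriction to any finite invariant set containing
the support. -/
theorem fsgn_eq_sign_subtypePerm {X : Type*} (σ : Equiv.Perm X) (h : {x : X | σ x ≠ x}.Finite)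
    {s : Set X} (hs : s.Finite) (hsub : {x : X | σ x ≠ x} ⊆ s)
    [Fintype s] [DecidableEq s] :
    fsgn σ h = Equiv.Perm.sign (σ.subtypePerm (invariant_of_supp_subset σ hsub)) := by
  letI : Fintype {x : X // σ x ≠ x} := h.fintype
  letI : DecidableEq {x : X // σ x ≠ x} := Classical.decEq _
  unfold fsgn
  symm
  refine Equiv.Perm.sign_bij
    (f := σ.subtypePerm (invariant_of_supp_subset σ hsub))
    (g := σ.subtypePerm (fsgn_cond σ))
    (fun (x : s) (hx : σ.subtypePerm (invariant_of_supp_subset σ hsub) x ≠ x) =>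
      (⟨x.1, fun hc => hx (Subtype.ext hc)⟩ : {x : X // σ x ≠ x})) ?_ ?_ ?_
  · intro x hx hx'
    apply Subtype.ext
    simp [Equiv.Perm.subtypePerm_apply]
  · intro x₁ x₂ _ _ hx
    exact Subtype.ext (congrArg Subtype.val hx : (_ : X) = _)
  · intro y hy
    have hy' : σ y.1 ≠ y.1 := y.2
    refine ⟨⟨y.1, hsub hy'⟩, ?_, rfl⟩
    intro hc
    exact hy' (congrArg Subtype.val hc)

theorem fsgn_mul {X : Type*} (σ τ : Equiv.Perm X) (hσ : {x : X | σ x ≠ x}.Finite)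
    (hτ : {x : X | τ x ≠ x}.Finite) (hστ : {x : X | (σ * τ) x ≠ x}.Finite) :
    fsgn (σ * τ) hστ = fsgn σ hσ * fsgn τ hτ := by
  classical
  set s : Set X := {x : X | σ x ≠ x} ∪ {x : X | τ x ≠ x} with hs_def
  have hs : s.Finite := hσ.union hτ
  letI : Fintype s := hs.fintype
  have hsubσ : {x : X | σ x ≠ x} ⊆ s := Set.subset_union_left
  have hsubτ : {x : X | τ x ≠ x} ⊆ s := Set.subset_union_right
  have hsubστ : {x : X | (σ * τ) x ≠ x} ⊆ s := by
    intro x hx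
    by_contra hc
    simp only [hs_def, Set.mem_union, Set.mem_setOf_eq, not_or, not_not] at hc
    exact hx (by simp [Equiv.Perm.mul_apply, hc.1, hc.2])
  rw [fsgn_eq_sign_subtypePerm σ hσ hs hsubσ, fsgn_eq_sign_subtypePerm τ hτ hs hsubτ,
    fsgn_eq_sign_subtypePerm (σ * τ) hστ hs hsubστ]
  rw [show (σ * τ).subtypePerm (invariant_of_supp_subset (σ * τ) hsubστ)
      = σ.subtypePerm (invariant_of_supp_subset σ hsubσ)
        * τ.subtypePerm (invariant_of_supp_subset τ hsubτ) from Equiv.ext fun x => rfl]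
  exact map_mul _ _ _

theorem fsgn_conj {X : Type*} (σ : Equiv.Perm X) (c : Equiv.Perm X)
    (h : {x : X | σ x ≠ x}.Finite) (h' : {x : X | (c * σ * c⁻¹) x ≠ x}.Finite) :
    fsgn (c * σ * c⁻¹) h' = fsgn σ h := by
  letI : Fintype {x : X // σ x ≠ x} := h.fintype
  letI : Fintype {x : X // (c * σ * c⁻¹) x ≠ x} := h'.fintype
  letI : DecidableEq {x : X // σ x ≠ x} := Classical.decEq _
  letI : DecidableEq {x : X // (c * σ * c⁻¹) x ≠ x} := Classical.decEq _
  unfold fsgn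
  symm
  refine Equiv.Perm.sign_bij
    (f := σ.subtypePerm (fsgn_cond σ))
    (g := (c * σ * c⁻¹).subtypePerm (fsgn_cond (c * σ * c⁻¹)))
    (fun (x : {x : X // σ x ≠ x}) _ =>
      (⟨c x.1, by simpa [Equiv.Perm.mul_apply] using fun hc => x.2 (c.injective hc)⟩ :
        {x : X // (c * σ * c⁻¹) x ≠ x})) ?_ ?_ ?_
  · intro x hx hx'
    apply Subtype.ext
    show c (σ x.1) = (c * σ * c⁻¹) (c x.1)
    simp [Equiv.Perm.subtypePerm_apply, Equiv.Perm.mul_apply]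
  · intro x₁ x₂ _ _ hx
    exact Subtype.ext (c.injective (congrArg Subtype.val hx))
  · intro y _
    have hy : (c * σ * c⁻¹) y.1 ≠ y.1 := y.2
    have hy' : σ (c⁻¹ y.1) ≠ c⁻¹ y.1 := by
      intro hc
      apply hy
      simp [Equiv.Perm.mul_apply, show σ (c.symm y.1) = c.symm y.1 from hc]
    refine ⟨⟨c⁻¹ y.1, hy'⟩, ?_, Subtype.ext (by simp)⟩
    intro hc
    exact hy' (congrArg Subtype.val hc)

theorem mem_fsym_iff {X : Type*} (σ : Equiv.Perm X) :
    σ ∈ fsym X ↔ {x : X | σ x ≠ x}.Finite := Iff.rfl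

/-- The sign homomorphism of the lampshuffler. -/
noncomputable def shufSgn (H : Type*) [Group H] : ↥(Shuffler H) →* ℤˣ where
  toFun p := fsgn p.1.left p.2
  map_one' := by
    have : fsgn (1 : Equiv.Perm H) (by simp) = 1 := by
      classical
      unfold fsgn
      rw [show (1 : Equiv.Perm H).subtypePerm (p := fun x => (1 : Equiv.Perm H) x ≠ x) (fsgn_cond 1) = 1 from Equiv.ext fun x => rfl]
      exact map_one _
    exact this
  map_mul' := by
    intro a b
    have hab : (a * b).1.left = a.1.left * permAct H a.1.right b.1.left := rfl
    have h1 : {x : H | a.1.left x ≠ x}.Finite := a.2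
    have h2 : {x : H | b.1.left x ≠ x}.Finite := b.2
    have h3 : {x : H | (permAct H a.1.right b.1.left) x ≠ x}.Finite :=
      permAct_mem_fsym _ h2
    have h4 : {x : H | (a.1.left * permAct H a.1.right b.1.left) x ≠ x}.Finite :=
      (a * b).2
    show fsgn (a.1.left * permAct H a.1.right b.1.left) h4
      = fsgn a.1.left h1 * fsgn b.1.left h2
    rw [fsgn_mul a.1.left (permAct H a.1.right b.1.left) h1 h3 h4]
    congr 1
    exact fsgn_conj b.1.left (MulAction.toPermHom H H a.1.right) h2 h3

end SignAux

/-- For a nontrivial group `H`, the lampshuffler `Shuffler(H) = FSym(H) ⋊ H`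
is not perfect: its commutator subgroup is proper. -/
theorem stmt_7 (H : Type*) [Group H] [Nontrivial H] :
    commutator ↥(Shuffler H) ≠ ⊤ := by
  classical
  intro htop
  obtain ⟨a, b, hab⟩ := exists_pair_ne H
  have hswap_mem : SemidirectProduct.inl (Equiv.swap a b) ∈ Shuffler H := by
    show (Equiv.swap a b) ∈ fsym H
    rw [mem_fsym_iff]
    apply Set.Finite.subset ((Set.finite_singleton b).insert a)
    intro x hx
    simp only [Set.mem_setOf_eq] at hx
    by_contra hc
    simp only [Set.mem_insert_iff, Set.mem_singleton_iff, not_or] at hc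
    exact hx (Equiv.swap_apply_of_ne_of_ne hc.1 hc.2)
  set g : ↥(Shuffler H) := ⟨SemidirectProduct.inl (Equiv.swap a b), hswap_mem⟩ with hg
  have hker : commutator ↥(Shuffler H) ≤ (shufSgn H).ker :=
    Abelianization.commutator_subset_ker (shufSgn H)
  rw [htop] at hker
  have hg_ker : shufSgn H g = 1 := hker (Subgroup.mem_top g)
  have hval : shufSgn H g = -1 := by
    show fsgn g.1.left g.2 = -1
    have hs : {x : H | (Equiv.swap a b) x ≠ x}.Finite := hswap_mem
    have heq : fsgn g.1.left g.2 = fsgn (Equiv.swap a b) hs := rfl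
    rw [heq]
    letI : Fintype {x : H // (Equiv.swap a b) x ≠ x} := hs.fintype
    letI : DecidableEq {x : H // (Equiv.swap a b) x ≠ x} := Classical.decEq _
    unfold fsgn
    have ha : (Equiv.swap a b) a ≠ a := by
      rw [Equiv.swap_apply_left]; exact hab.symm
    have hb : (Equiv.swap a b) b ≠ b := by
      rw [Equiv.swap_apply_right]; exact hab
    have hne : (⟨a, ha⟩ : {x : H // (Equiv.swap a b) x ≠ x}) ≠ ⟨b, hb⟩ := by
      intro hc
      exact hab (congrArg Subtype.val hc)
    have hsw : (Equiv.swap a b).subtypePerm (fsgn_cond (Equiv.swap a b))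
        = Equiv.swap (⟨a, ha⟩ : {x : H // (Equiv.swap a b) x ≠ x}) ⟨b, hb⟩ := by
      ext x
      have hx : (Equiv.swap a b) x.1 ≠ x.1 := x.2
      have hx' : x.1 = a ∨ x.1 = b := by
        by_contra hc
        simp only [not_or] at hc
        exact hx (Equiv.swap_apply_of_ne_of_ne hc.1 hc.2)
      rcases hx' with h | h
      · have hxa : x = ⟨a, ha⟩ := Subtype.ext h
        subst hxa
        simp [Equiv.Perm.subtypePerm_apply, Equiv.swap_apply_left,
          Equiv.swap_apply_of_ne_of_ne, hne]
      · have hxb : x = ⟨b, hb⟩ := Subtype.ext h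
        subst hxb
        simp [Equiv.Perm.subtypePerm_apply, Equiv.swap_apply_right,
          Equiv.swap_apply_of_ne_of_ne, hne]
    rw [hsw]
    exact Equiv.Perm.sign_swap hne
  rw [hg_ker] at hval
  exact absurd hval (by decide)
end

section
/- Let H be a group and F a finite group. The map from the lampdesigner (F ≀_H FSym(H)) ⋊ H to the lampjuggler FSym(H × F) ⋊ H sending ((f, σ), h) to (σ', h), where σ'(x, i) = (σ(x), f(x)·i), is an injective group homomorphism. In particular the lampdesigner embeds into the lampjuggler with |F| colors. -/
theorem permAct_inv_apply {H : Type*} [Group H] (h : H) (σ : Equiv.Perm H) (x : H) :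
    (permAct H h σ)⁻¹ x = h * σ⁻¹ (h⁻¹ * x) := by
  rw [← map_inv]; rfl

def permOnFunAct (F H : Type*) [Group F] : Equiv.Perm H →* MulAut (H → F) where
  toFun σ :=
    { toFun := fun f x => f (σ⁻¹ x)
      invFun := fun f x => f (σ x)
      left_inv := by intro f; funext x; simp
      right_inv := by intro f; funext x; simp
      map_mul' := by intro f g; rfl }
  map_one' := by ext f x; simp
  map_mul' := by intro σ τ; ext f x; simp

abbrev InnerDes (F H : Type*) [Group F] [Group H] :=
  SemidirectProduct (H → F) (Equiv.Perm H) (permOnFunAct F H)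

def desAct (F H : Type*) [Group F] [Group H] : H →* MulAut (InnerDes F H) where
  toFun h :=
    { toFun := fun p => ⟨fun x => p.left (h⁻¹ * x), permAct H h p.right⟩
      invFun := fun p => ⟨fun x => p.left (h * x), permAct H h⁻¹ p.right⟩
      left_inv := by
        intro p
        ext
        · dsimp only; simp
        · dsimp only; simp [← MulAut.mul_apply, ← map_mul]
      right_inv := by
        intro p
        ext
        · dsimp only; simp
        · dsimp only; simp [permAct_apply]
      map_mul' := by
        intro p q
        ext x
        · dsimp only
          simp only [SemidirectProduct.mul_left]
          dsimp [permOnFunAct]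
          congr 1
          first
            | (rw [permAct_inv_apply, inv_mul_cancel_left])
            | (erw [← Equiv.Perm.inv_def, permAct_inv_apply, inv_mul_cancel_left])
            | simp [← Equiv.Perm.inv_def, permAct_inv_apply]
        · dsimp only
          simp [SemidirectProduct.mul_right, map_mul] }
  map_one' := by
    ext p <;> simp
  map_mul' := by
    intro h₁ h₂
    ext p <;> simp [MulAut.mul_apply, mul_assoc, map_mul]

theorem permOnFunAct_mem {F H : Type*} [Group F] (σ : Equiv.Perm H) {f : H → F}
    (hf : f ∈ finSuppFuns H F) : permOnFunAct F H σ f ∈ finSuppFuns H F := by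
  refine Set.Finite.subset (Set.Finite.image σ hf) ?_
  intro x hx
  exact ⟨σ⁻¹ x, hx, by simp⟩

theorem transl_mem {F H : Type*} [Group F] [Group H] (h : H) {f : H → F}
    (hf : f ∈ finSuppFuns H F) : (fun x => f (h⁻¹ * x)) ∈ finSuppFuns H F := by
  refine Set.Finite.subset (Set.Finite.image (fun x => h * x) hf) ?_
  intro x hx
  exact ⟨h⁻¹ * x, hx, by simp⟩

abbrev BigDesigner (F H : Type*) [Group F] [Group H] :=
  SemidirectProduct (InnerDes F H) H (desAct F H)

/-- The lampdesigner `(F ≀_H FSym(H)) ⋊ H`, as the subgroup of the unrestricted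
version whose function part and permutation part are finitely supported. -/
def Designer (F H : Type*) [Group F] [Group H] : Subgroup (BigDesigner F H) where
  carrier := {p | p.left.left ∈ finSuppFuns H F ∧ p.left.right ∈ fsym H}
  one_mem' := by
    constructor
    · simp only [SemidirectProduct.one_left]; exact one_mem _
    · simp only [SemidirectProduct.one_left]; exact one_mem _
  mul_mem' := by
    intro a b ha hb
    simp only [Set.mem_setOf_eq, SemidirectProduct.mul_left,
      SemidirectProduct.mul_right] at *
    constructor
    · exact mul_mem ha.1 (permOnFunAct_mem _ (transl_mem _ hb.1))
    · exact mul_mem ha.2 (permAct_mem_fsym _ hb.2)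
  inv_mem' := by
    intro a ha
    simp only [Set.mem_setOf_eq, SemidirectProduct.inv_left,
      SemidirectProduct.inv_right] at *
    constructor
    · exact transl_mem _ (permOnFunAct_mem _ (inv_mem ha.1))
    · exact permAct_mem_fsym _ (inv_mem ha.2)

/-- The permutation of `H × F` induced by left translation by `h ∈ H` on the
first coordinate. -/
def jugPermHom (F H : Type*) [Group H] : H →* Equiv.Perm (H × F) where
  toFun h := Equiv.prodCongr (Equiv.mulLeft h) (Equiv.refl F)
  map_one' := by ext x <;> simp
  map_mul' := by intro a b; ext x <;> simp [mul_assoc]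

/-- The action of `H` on `Perm (H × F)` by conjugation with translations. -/
def jugAct (F H : Type*) [Group H] : H →* MulAut (Equiv.Perm (H × F)) :=
  MulAut.conj.comp (jugPermHom F H)

abbrev BigJuggler (F H : Type*) [Group H] :=
  SemidirectProduct (Equiv.Perm (H × F)) H (jugAct F H)

/-- The lampjuggler `FSym(H × F) ⋊ H`, as the subgroup of the unrestricted
version whose permutation part is finitely supported. -/
def Juggler (F H : Type*) [Group H] : Subgroup (BigJuggler F H) where
  carrier := {p | p.left ∈ fsym (H × F)}
  one_mem' := by
    simp only [Set.mem_setOf_eq, SemidirectProduct.one_left]; exact one_mem _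
  mul_mem' := by
    intro a b ha hb
    simp only [Set.mem_setOf_eq, SemidirectProduct.mul_left] at *
    exact mul_mem ha (conj_mem_fsym _ hb)
  inv_mem' := by
    intro a ha
    simp only [Set.mem_setOf_eq, SemidirectProduct.inv_left] at *
    exact conj_mem_fsym _ (inv_mem ha)

def psiHom (F H : Type*) [Group F] [Group H] : InnerDes F H →* Equiv.Perm (H × F) where
  toFun p := Equiv.prodShear p.right (fun x => Equiv.mulLeft (p.left (p.right x)))
  map_one' := by ext x <;> simp [Equiv.prodShear]
  map_mul' := by
    intro p q
    ext x
    · simp [Equiv.prodShear]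
    · simp [Equiv.prodShear, SemidirectProduct.mul_left, SemidirectProduct.mul_right,
        permOnFunAct, mul_assoc]

theorem psiHom_injective (F H : Type*) [Group F] [Group H] :
    Function.Injective (psiHom F H) := by
  intro p q hpq
  have h1 : ∀ x : H, p.right x = q.right x := by
    intro x
    have := congrArg (fun e => (e (x, (1 : F))).1) hpq
    simpa [psiHom, Equiv.prodShear] using this
  have hr : p.right = q.right := Equiv.ext h1
  have h2 : ∀ x : H, p.left (p.right x) = q.left (p.right x) := by
    intro x
    have := congrArg (fun e => (e (x, (1 : F))).2) hpq
    simpa [psiHom, Equiv.prodShear, hr, ← h1 x] using this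
  ext
  · rename_i x
    have := h2 (p.right⁻¹ x)
    simpa using this
  · rw [hr]

theorem psiHom_compat (F H : Type*) [Group F] [Group H] (h : H) :
    (psiHom F H).comp ((desAct F H h).toMonoidHom) =
      ((jugAct F H ((MonoidHom.id H) h)).toMonoidHom).comp (psiHom F H) := by
  ext p x
  · simp [psiHom, desAct, jugAct, jugPermHom, Equiv.prodShear, permAct_apply,
      MulAut.conj, Equiv.Perm.inv_def, Equiv.prodCongr_symm]
  · simp [psiHom, desAct, jugAct, jugPermHom, Equiv.prodShear, permAct_apply,
      MulAut.conj, inv_mul_cancel_left, Equiv.Perm.inv_def, Equiv.prodCongr_symm]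

/-- for a group `H` and a finite group `F`, the map from the
lampdesigner `(F ≀_H FSym(H)) ⋊ H` to the lampjuggler `FSym(H × F) ⋊ H`
sending `((f, σ), h)` to `(σ', h)`, where `σ'` maps `(x, i)` to
`(σ(x), f(x)·i)` (written below, in Mathlib's semidirect-product convention,
as `σ'(x, i) = (σ(x), f(σ(x))·i)`), is an injective group homomorphism; in
particular the lampdesigner embeds into the lampjuggler with `|F|` colors. -/
theorem stmt_15 (F H : Type*) [Group F] [Group H] [Finite F] :
    ∃ Φ : BigDesigner F H →* BigJuggler F H,
      Function.Injective Φ ∧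
      (∀ (f : H → F) (σ : Equiv.Perm H) (h : H),
        Φ ⟨⟨f, σ⟩, h⟩
          = ⟨Equiv.prodShear σ (fun x => Equiv.mulLeft (f (σ x))), h⟩) ∧
      (∀ p, p ∈ Designer F H → Φ p ∈ Juggler F H) := by
  refine ⟨SemidirectProduct.map (psiHom F H) (MonoidHom.id H) (psiHom_compat F H),
    ?_, ?_, ?_⟩
  · intro p q hpq
    have hl := congrArg SemidirectProduct.left hpq
    have hr := congrArg SemidirectProduct.rightHom hpq
    simp only [SemidirectProduct.map_left] at hl
    ext1
    · exact psiHom_injective F H hl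
    · simpa using hr
  · intro f σ h
    rfl
  · rintro p ⟨hf, hσ⟩
    show psiHom F H p.left ∈ fsym (H × F)
    have : {x : H × F | psiHom F H p.left x ≠ x} ⊆
        ({x : H | p.left.right x ≠ x} ∪ p.left.right ⁻¹' (Function.mulSupport p.left.left)) ×ˢ
          Set.univ := by
      rintro ⟨x, i⟩ hx
      simp only [Set.mem_setOf_eq, psiHom, MonoidHom.coe_mk, OneHom.coe_mk,
        Equiv.prodShear_apply] at hx
      rw [Ne, Prod.mk.injEq, not_and_or] at hx
      constructor
      · rcases hx with hx | hx
        · exact Or.inl hx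
        · by_cases hs : p.left.right x = x
          · refine Or.inr ?_
            simp only [Set.mem_preimage, Function.mem_mulSupport]
            intro hc
            rw [hs] at hx hc
            rw [hc] at hx
            simp at hx
          · exact Or.inl hs
      · trivial
    refine Set.Finite.subset (Set.Finite.prod ?_ Set.finite_univ) this
    exact (hσ.union (Set.Finite.preimage (Equiv.injective _).injOn hf))
end

section
/- Let H be a group with a subgroup K and a set S of coset representatives for H/K (so H = ⊔_{k∈K} kS). For σ ∈ FSym(H) satisfying σ(kS) = kS for all k ∈ K, define f_σ : K → FSym(S) by f_σ(k) = (k⁻¹·σ)|_S, where (k⁻¹·σ)(x) = k⁻¹σ(kx). Then for all such σ, τ and all k₀ ∈ K: (a) f_σ has finite support as a function K → FSym(S); (b) f_{σ∘τ}(k) = f_σ(k) ∘ f_τ(k) for all k ∈ K; (c) f_{k₀·σ}(k) = f_σ(k₀⁻¹k) for all k ∈ K. -/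
open Pointwise

open Pointwise in
/-- Let `K ≤ H` and let `S` be a set of coset representatives for `H/K`
(so `(k,s) ↦ k·s` is a bijection `K × S → H`). For `σ ∈ FSym(H)` preserving
every block `kS`, define `f_σ(k) = (k⁻¹·σ)|_S`, i.e. `f_σ(k)(s) = k⁻¹ σ(k s)`.
Then: `f_σ(k)` maps `S` to `S`; (a) `f_σ` has finite support; (b)
`f_{σ∘τ}(k) = f_σ(k) ∘ f_τ(k)`; and (c) `f_{k₀·σ}(k) = f_σ(k₀⁻¹ k)`. -/
theorem stmt_18 (H : Type*) [Group H] (K : Subgroup H) (S : Set H)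
    (hS : Function.Bijective (fun p : K × S => (p.1 : H) * (p.2 : H)))
    (σ τ : Equiv.Perm H) (hσfin : σ ∈ fsym H) (hτfin : τ ∈ fsym H)
    (hσblocks : ∀ k : K, ⇑σ '' ((k : H) • S) = (k : H) • S)
    (hτblocks : ∀ k : K, ⇑τ '' ((k : H) • S) = (k : H) • S)
    (k₀ : K) :
    (∀ k : K, ∀ s ∈ S, (k : H)⁻¹ * σ ((k : H) * s) ∈ S) ∧
    {k : K | ∃ s ∈ S, (k : H)⁻¹ * σ ((k : H) * s) ≠ s}.Finite ∧
    (∀ k : K, ∀ s ∈ S,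
        (k : H)⁻¹ * (σ * τ) ((k : H) * s)
          = (k : H)⁻¹ * σ ((k : H) * ((k : H)⁻¹ * τ ((k : H) * s)))) ∧
    (∀ k : K, ∀ s ∈ S,
        (k : H)⁻¹ * (permAct H (k₀ : H) σ) ((k : H) * s)
          = ((k₀⁻¹ * k : K) : H)⁻¹ * σ (((k₀⁻¹ * k : K) : H) * s)) := by
  
  have hmem : ∀ k : K, ∀ s ∈ S, (k : H)⁻¹ * σ ((k : H) * s) ∈ S := by
    intro k s hs
    have : σ ((k : H) * s) ∈ (k : H) • S := by
      rw [← hσblocks k]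
      exact ⟨(k : H) * s, ⟨s, hs, rfl⟩, rfl⟩
    obtain ⟨t, ht, hts⟩ := this
    rw [← hts]
    simpa [smul_eq_mul] using ht
  refine ⟨hmem, ?_, ?_, ?_⟩
  · -- finiteness
    have hsub : {k : K | ∃ s ∈ S, (k : H)⁻¹ * σ ((k : H) * s) ≠ s} ⊆
        (fun h : H => ((Equiv.ofBijective _ hS).symm h).1) '' {x : H | σ x ≠ x} := by
      rintro k ⟨s, hs, hne⟩
      refine ⟨(k : H) * s, ?_, ?_⟩
      · simp only [Set.mem_setOf_eq]
        intro h
        apply hne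
        rw [h, inv_mul_cancel_left]
      · have : (Equiv.ofBijective _ hS).symm ((k : H) * s) = (k, ⟨s, hs⟩) := by
          apply (Equiv.ofBijective _ hS).injective
          rw [Equiv.apply_symm_apply]
          rfl
        show ((Equiv.ofBijective _ hS).symm ((k : H) * s)).1 = k
        rw [this]
    exact (hσfin.image _).subset hsub
  · intro k s hs
    simp [Equiv.Perm.mul_apply, mul_inv_cancel_left]
  · intro k s hs
    rw [permAct_apply]
    push_cast
    group
end
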